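/- Let G be a finite simple graph of order n and size m with 0 ≤ m ≤ n − 1. Then σ(G) = m(m − 1)² holds if and only if G is either an edgeless graph (in the case m = 0) or G consists of the star S_{m+1} together with n − m − 1 isolated vertices (in the case m ≥ 1). -/
import Mathlib


open Finset
open scoped Classical

/-- The sigma index of a graph: `σ(G) = ∑_{uv ∈ E(G)} (d_u - d_v)²`. -/
noncomputable def sigmaIndex {V : Type*} [Fintype V] (G : SimpleGraph V) : ℤ :=
  ∑ e ∈ G.edgeFinset,
    Sym2.lift ⟨fun u v => ((G.degree u : ℤ) - (G.degree v : ℤ)) ^ 2, fun u v => by ring⟩ e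

/-- For adjacent vertices, the degree sum is at most the number of edges plus one. -/
lemma deg_add_deg_le_card_add_one {V : Type*} [Fintype V] [DecidableEq V]
    (G : SimpleGraph V) {u v : V} (h : G.Adj u v) :
    G.degree u + G.degree v ≤ G.edgeFinset.card + 1 := by
  have hint : G.incidenceFinset u ∩ G.incidenceFinset v = {s(u, v)} := by
    ext e
    simp only [Finset.mem_inter, SimpleGraph.mem_incidenceFinset, Finset.mem_singleton]
    constructor
    · intro ⟨h1, h2⟩
      exact Set.mem_singleton_iff.1
        ((G.incidenceSet_inter_incidenceSet_of_adj h) ▸ (Set.mem_inter h1 h2))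
    · rintro rfl
      constructor
      · exact ⟨G.mem_edgeSet.2 h, Sym2.mem_mk_left u v⟩
      · exact ⟨G.mem_edgeSet.2 h, Sym2.mem_mk_right u v⟩
  have hsub : G.incidenceFinset u ∪ G.incidenceFinset v ⊆ G.edgeFinset := by
    intro e he
    rcases Finset.mem_union.1 he with h' | h' <;>
      [skip; skip] <;>
      · rw [SimpleGraph.mem_incidenceFinset] at h'
        exact (SimpleGraph.mem_edgeFinset).2 h'.1
  have := Finset.card_union_add_card_inter (G.incidenceFinset u) (G.incidenceFinset v)
  rw [hint, Finset.card_singleton, G.card_incidenceFinset_eq_degree,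
    G.card_incidenceFinset_eq_degree] at this
  have hle := Finset.card_le_card hsub
  omega

/-- If a vertex `c` lies on every edge and `c` is adjacent to `v`, then `v` has degree one. -/
lemma degree_eq_one_of_center {V : Type*} [Fintype V] [DecidableEq V]
    (G : SimpleGraph V) {c v : V} (hinc : ∀ e ∈ G.edgeFinset, c ∈ e) (hadj : G.Adj c v) :
    G.degree v = 1 := by
  have hset : G.incidenceFinset v = {s(c, v)} := by
    apply Finset.eq_singleton_iff_unique_mem.2
    constructor
    · rw [SimpleGraph.mem_incidenceFinset]
      exact ⟨G.mem_edgeSet.2 hadj, Sym2.mem_mk_right c v⟩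
    · intro e' he'
      rw [SimpleGraph.mem_incidenceFinset] at he'
      obtain ⟨heE, hv⟩ := he'
      have hc : c ∈ e' := hinc e' ((SimpleGraph.mem_edgeFinset).2 heE)
      exact (Sym2.mem_and_mem_iff hadj.ne).1 ⟨hc, hv⟩
  rw [← G.card_incidenceFinset_eq_degree, hset, Finset.card_singleton]

/-- If `G` has order `n` and size `m` with `0 ≤ m ≤ n - 1`, then
`σ(G) = m (m - 1)²` if and only if `G` is edgeless (case `m = 0`), or `G` consists of the
star `S_{m+1}` together with `n - m - 1` isolated vertices (case `m ≥ 1`); the latter is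
expressed by saying that there is a vertex `c` of degree `m` incident with every edge of `G`. -/
theorem sigma_eq_iff_star {V : Type*} [Fintype V] (G : SimpleGraph V)
    (n m : ℕ) (hn : Fintype.card V = n) (hm : G.edgeFinset.card = m) (hmn : m ≤ n - 1) :
    sigmaIndex G = (m : ℤ) * ((m : ℤ) - 1) ^ 2 ↔
      ((m = 0 ∧ ∀ u w : V, ¬ G.Adj u w) ∨
        (1 ≤ m ∧ ∃ c : V, G.degree c = m ∧ ∀ e ∈ G.edgeFinset, c ∈ e)) := by
  classical
  set f : Sym2 V → ℤ :=
    Sym2.lift ⟨fun u v => ((G.degree u : ℤ) - (G.degree v : ℤ)) ^ 2, fun u v => by ring⟩ with hf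
  -- each term is at most (m-1)^2
  have key : ∀ e ∈ G.edgeFinset, f e ≤ ((m : ℤ) - 1) ^ 2 := by
    intro e he
    induction e using Sym2.ind with
    | _ u v =>
      have hadj : G.Adj u v := (SimpleGraph.mem_edgeFinset).1 he
      have hu : 1 ≤ G.degree u := (G.degree_pos_iff_exists_adj u).2 ⟨v, hadj⟩
      have hv : 1 ≤ G.degree v := (G.degree_pos_iff_exists_adj v).2 ⟨u, hadj.symm⟩
      have hsum : G.degree u + G.degree v ≤ m + 1 := by
        have := deg_add_deg_le_card_add_one G hadj
        omega
      have hu' : (1 : ℤ) ≤ (G.degree u : ℤ) := by exact_mod_cast hu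
      have hv' : (1 : ℤ) ≤ (G.degree v : ℤ) := by exact_mod_cast hv
      have hsum' : (G.degree u : ℤ) + (G.degree v : ℤ) ≤ (m : ℤ) + 1 := by exact_mod_cast hsum
      simp only [hf, Sym2.lift_mk]
      nlinarith [sq_nonneg ((G.degree u : ℤ) - (G.degree v : ℤ)),
        mul_nonneg (sub_nonneg.2 hu') (sub_nonneg.2 hv')]
  have hconst : ∑ _e ∈ G.edgeFinset, ((m : ℤ) - 1) ^ 2 = (m : ℤ) * ((m : ℤ) - 1) ^ 2 := by
    rw [Finset.sum_const, hm, nsmul_eq_mul]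
  constructor
  · intro heq
    rcases Nat.eq_zero_or_pos m with hm0 | hm1
    · left
      refine ⟨hm0, fun u w hadj => ?_⟩
      have : G.edgeFinset = ∅ := Finset.card_eq_zero.1 (hm0 ▸ hm)
      have : s(u, w) ∈ G.edgeFinset := (SimpleGraph.mem_edgeFinset).2 (G.mem_edgeSet.2 hadj)
      simp_all
    · right
      refine ⟨hm1, ?_⟩
      have heq' : ∑ e ∈ G.edgeFinset, f e = ∑ _e ∈ G.edgeFinset, ((m : ℤ) - 1) ^ 2 := by
        rw [hconst]; exact heq
      have hall : ∀ e ∈ G.edgeFinset, f e = ((m : ℤ) - 1) ^ 2 :=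
        (Finset.sum_eq_sum_iff_of_le key).1 heq'
      obtain ⟨e₀, he₀⟩ := Finset.card_pos.1 (by rw [hm]; exact hm1)
      -- find the center vertex
      have hcenter : ∃ c : V, G.degree c = m := by
        induction e₀ using Sym2.ind with
        | _ u v =>
          have hadj : G.Adj u v := (SimpleGraph.mem_edgeFinset).1 he₀
          have hu : 1 ≤ G.degree u := (G.degree_pos_iff_exists_adj u).2 ⟨v, hadj⟩
          have hv : 1 ≤ G.degree v := (G.degree_pos_iff_exists_adj v).2 ⟨u, hadj.symm⟩
          have hsum : G.degree u + G.degree v ≤ m + 1 := by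
            have := deg_add_deg_le_card_add_one G hadj
            omega
          have hterm := hall _ he₀
          simp only [hf, Sym2.lift_mk] at hterm
          have ha1 : (1 : ℤ) ≤ (G.degree u : ℤ) := by exact_mod_cast hu
          have hb1 : (1 : ℤ) ≤ (G.degree v : ℤ) := by exact_mod_cast hv
          have hab : (G.degree u : ℤ) + (G.degree v : ℤ) ≤ (m : ℤ) + 1 := by exact_mod_cast hsum
          have hm1' : (1 : ℤ) ≤ (m : ℤ) := by exact_mod_cast hm1
          have hcases : (G.degree u : ℤ) = (m : ℤ) ∨ (G.degree v : ℤ) = (m : ℤ) := by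
            have hzero : ((G.degree u : ℤ) - 1) * ((G.degree v : ℤ) - 1) = 0 := by nlinarith
            rcases mul_eq_zero.1 hzero with h1 | h1
            · right
              have ha' : (G.degree u : ℤ) = 1 := by linarith
              rw [ha'] at hterm
              have h2 : ((G.degree v : ℤ) - (m : ℤ)) * ((G.degree v : ℤ) + (m : ℤ) - 2) = 0 := by
                linear_combination hterm
              rcases mul_eq_zero.1 h2 with h3 | h3
              · linarith
              · linarith
            · left
              have hb' : (G.degree v : ℤ) = 1 := by linarith
              rw [hb'] at hterm
              have h2 : ((G.degree u : ℤ) - (m : ℤ)) * ((G.degree u : ℤ) + (m : ℤ) - 2) = 0 := by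
                linear_combination hterm
              rcases mul_eq_zero.1 h2 with h3 | h3
              · linarith
              · linarith
          rcases hcases with h1 | h1
          · exact ⟨u, by exact_mod_cast h1⟩
          · exact ⟨v, by exact_mod_cast h1⟩
      obtain ⟨c, hc⟩ := hcenter
      refine ⟨c, hc, ?_⟩
      have hsub : G.incidenceFinset c ⊆ G.edgeFinset := by
        intro e he
        rw [SimpleGraph.mem_incidenceFinset] at he
        exact (SimpleGraph.mem_edgeFinset).2 he.1
      have heqset : G.edgeFinset = G.incidenceFinset c := by
        apply (Finset.eq_of_subset_of_card_le hsub ?_).symm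
        rw [G.card_incidenceFinset_eq_degree, hc, hm]
      intro e he
      rw [heqset, SimpleGraph.mem_incidenceFinset] at he
      exact he.2
  · rintro (⟨hm0, hadj⟩ | ⟨hm1, c, hdeg, hinc⟩)
    · have hempty : G.edgeFinset = ∅ := by
        apply Finset.eq_empty_iff_forall_notMem.2
        intro e he
        induction e using Sym2.ind with
        | _ u v => exact hadj u v ((SimpleGraph.mem_edgeFinset).1 he)
      subst hm0
      simp [sigmaIndex, hempty]
    · have hall : ∀ e ∈ G.edgeFinset, f e = ((m : ℤ) - 1) ^ 2 := by
        intro e he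
        induction e using Sym2.ind with
        | _ u v =>
          have hadj : G.Adj u v := (SimpleGraph.mem_edgeFinset).1 he
          have hc : c ∈ s(u, v) := hinc _ he
          simp only [hf, Sym2.lift_mk]
          rcases Sym2.mem_iff.1 hc with rfl | rfl
          · have h1 : G.degree v = 1 := degree_eq_one_of_center G hinc hadj
            rw [hdeg, h1]
            push_cast
            ring
          · have h1 : G.degree u = 1 := degree_eq_one_of_center G hinc hadj.symm
            rw [hdeg, h1]
            push_cast
            ring
      show ∑ e ∈ G.edgeFinset, f e = _
      rw [Finset.sum_congr rfl hall, hconst]
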